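/- arXiv:1006.5963 — 2 statements merged into one kernel-verified Lean document; each statement's English description precedes it below -/
import Mathlib

section
/- Let V : (0,1] → ℝ be continuously differentiable satisfying V'(s) + (2/s)V(s) = −(1/2)V(s)² − h(s) for s ∈ (0,1], where h ≥ 0, ∫₀¹ h(s) ds ≤ Δ², |V| ≤ Δ on (0,1] with 0 < Δ ≤ 1/2, and s²V(s) → 0 as s → 0⁺. Then |V(s)| ≤ C·Δ² for all s ∈ (0,1], for an absolute constant C. -/
open MeasureTheory Set Filter

/-- Raychaudhuri-type estimate: if `V' + (2/s)V = -(1/2)V² - h` on `(0,1]` with `h ≥ 0`,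
`∫₀¹ h ≤ Δ²`, `|V| ≤ Δ ≤ 1/2` and `s²V(s) → 0` as `s → 0⁺`, then `|V| ≤ C Δ²` for an
absolute constant `C`. -/
theorem stmt_2 :
    ∃ C : ℝ, 0 < C ∧
      ∀ (V V' h : ℝ → ℝ) (Δ : ℝ), 0 < Δ → Δ ≤ 1 / 2 →
        (∀ s ∈ Ioc (0:ℝ) 1, HasDerivAt V (V' s) s) →
        ContinuousOn V' (Ioc (0:ℝ) 1) →
        (∀ s ∈ Ioc (0:ℝ) 1, V' s + (2 / s) * V s = -(1 / 2) * (V s) ^ 2 - h s) →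
        (∀ s ∈ Ioc (0:ℝ) 1, 0 ≤ h s) →
        IntegrableOn h (Ioc (0:ℝ) 1) →
        (∫ s in Ioc (0:ℝ) 1, h s) ≤ Δ ^ 2 →
        (∀ s ∈ Ioc (0:ℝ) 1, |V s| ≤ Δ) →
        Tendsto (fun s => s ^ 2 * V s) (nhdsWithin 0 (Ioi 0)) (nhds 0) →
        ∀ s ∈ Ioc (0:ℝ) 1, |V s| ≤ C * Δ ^ 2 := by
  refine ⟨2, by norm_num, ?_⟩
  intro V V' h Δ hΔ hΔhalf hdV hV'cont hode hh hhint hhΔ hVbd hlim s hs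
  obtain ⟨hs0, hs1⟩ := hs
  set g : ℝ → ℝ := fun t => -(t ^ 2 * ((1/2) * (V t) ^ 2 + h t)) with hgdef
  have hsub : Ioc (0:ℝ) s ⊆ Ioc 0 1 := Ioc_subset_Ioc_right hs1
  -- continuity of V on Ioc 0 1
  have hVcont : ContinuousOn V (Ioc (0:ℝ) 1) := fun t ht =>
    ((hdV t ht).continuousAt).continuousWithinAt
  -- derivative of W := s^2 * V
  have hW : ∀ t ∈ Ioc (0:ℝ) 1, HasDerivAt (fun u => u ^ 2 * V u) (g t) t := by
    intro t ht
    have ht0 : t ≠ 0 := ne_of_gt ht.1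
    have h1 : HasDerivAt (fun u : ℝ => u ^ 2) (2 * t) t := by
      simpa using (hasDerivAt_pow 2 t)
    have h2 : HasDerivAt (fun u => u ^ 2 * V u) (2 * t * V t + t ^ 2 * V' t) t := h1.mul (hdV t ht)
    convert h2 using 1
    have hodet := hode t ht
    have hV' : V' t = -((2 / t) * V t) - (1/2) * (V t)^2 - h t := by linarith
    rw [hV']
    field_simp
    ring
  -- integrability of g on Ioc 0 s
  have hhints : IntegrableOn h (Ioc (0:ℝ) s) := hhint.mono_set hsub
  have hVm : AEStronglyMeasurable V (volume.restrict (Ioc (0:ℝ) s)) :=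
    (hVcont.mono hsub).aestronglyMeasurable measurableSet_Ioc
  have hgm : AEStronglyMeasurable g (volume.restrict (Ioc (0:ℝ) s)) := by
    apply AEStronglyMeasurable.neg
    exact ((continuous_pow 2).aestronglyMeasurable).mul
      ((aestronglyMeasurable_const.mul (hVm.mul hVm |>.congr (by
        filter_upwards with x using by simp [Pi.mul_apply, sq]))).add hhints.aestronglyMeasurable)
  have hgbound : ∀ t ∈ Ioc (0:ℝ) s, ‖g t‖ ≤ s ^ 2 * ((1/2) * Δ ^ 2) + s ^ 2 * h t := by
    intro t ht
    have ht1 : t ∈ Ioc (0:ℝ) 1 := hsub ht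
    have hts : t ≤ s := ht.2
    have ht0 : 0 ≤ t := le_of_lt ht.1
    have hVt : |V t| ≤ Δ := hVbd t ht1
    have hV2 : (V t) ^ 2 ≤ Δ ^ 2 := by
      have := sq_abs (V t)
      nlinarith [abs_nonneg (V t)]
    have hh0 : 0 ≤ h t := hh t ht1
    have ht2 : t ^ 2 ≤ s ^ 2 := by nlinarith
    have hnn : 0 ≤ t ^ 2 * ((1/2) * (V t) ^ 2 + h t) := by positivity
    rw [hgdef]
    simp only [norm_neg, Real.norm_eq_abs, abs_of_nonneg hnn]
    nlinarith [sq_nonneg (V t), sq_nonneg t]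
  have hGint : IntegrableOn (fun t => s ^ 2 * ((1/2) * Δ ^ 2) + s ^ 2 * h t)
      (Ioc (0:ℝ) s) := (integrable_const _).add (hhints.const_mul _)
  have hgint : IntegrableOn g (Ioc (0:ℝ) s) := by
    apply Integrable.mono' hGint hgm
    rw [ae_restrict_iff' measurableSet_Ioc]
    exact Filter.Eventually.of_forall hgbound
  -- FTC identity for ε ∈ Ioc 0 s
  have key : ∀ ε ∈ Ioc (0:ℝ) s,
      s ^ 2 * V s - ε ^ 2 * V ε = (∫ t in Ioc (0:ℝ) s, g t) - ∫ t in Ioc (0:ℝ) ε, g t := by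
    intro ε hε
    have hε0 : 0 < ε := hε.1
    have hεs : ε ≤ s := hε.2
    have hsubε : Icc ε s ⊆ Ioc (0:ℝ) 1 := fun x hx => ⟨lt_of_lt_of_le hε0 hx.1, hx.2.trans hs1⟩
    have hii : IntervalIntegrable g volume ε s := by
      rw [intervalIntegrable_iff_integrableOn_Ioc_of_le hεs]
      exact hgint.mono_set (Ioc_subset_Ioc_left (le_of_lt hε0))
    have hftc := intervalIntegral.integral_eq_sub_of_hasDerivAt
      (f := fun u => u ^ 2 * V u) (f' := g) (a := ε) (b := s)
      (fun x hx => hW x (hsubε ((uIcc_of_le hεs) ▸ hx))) hii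
    have hsplit : (∫ t in Ioc (0:ℝ) s, g t)
        = (∫ t in Ioc (0:ℝ) ε, g t) + ∫ t in Ioc ε s, g t := by
      rw [← setIntegral_union (Set.Ioc_disjoint_Ioc_of_le le_rfl) measurableSet_Ioc
        (hgint.mono_set (Ioc_subset_Ioc_right hεs))
        (hgint.mono_set (Ioc_subset_Ioc_left (le_of_lt hε0)))]
      rw [Set.Ioc_union_Ioc_eq_Ioc (le_of_lt hε0) hεs]
    rw [intervalIntegral.integral_of_le hεs] at hftc
    rw [hsplit]
    linarith [hftc]
  -- the limit ε → 0⁺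
  have hFcont : ContinuousOn (fun x => ∫ t in Ioc (0:ℝ) x, g t) (Icc 0 s) := by
    apply intervalIntegral.continuousOn_primitive
    rwa [integrableOn_Icc_iff_integrableOn_Ioc]
  have hFtend : Tendsto (fun ε => ∫ t in Ioc (0:ℝ) ε, g t) (nhdsWithin 0 (Ioi 0)) (nhds 0) := by
    have h0 : (0:ℝ) ∈ Icc (0:ℝ) s := ⟨le_refl _, le_of_lt hs0⟩
    have := (hFcont 0 h0)
    rw [ContinuousWithinAt] at this
    have h00 : (∫ t in Ioc (0:ℝ) (0:ℝ), g t) = 0 := by simp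
    rw [h00] at this
    have hle : nhdsWithin (0:ℝ) (Ioi 0) = nhdsWithin (0:ℝ) (Ioc 0 s) :=
      (nhdsWithin_Ioc_eq_nhdsGT hs0).symm
    rw [hle]
    exact this.mono_left (nhdsWithin_mono _ Ioc_subset_Icc_self)
  have heq : s ^ 2 * V s = ∫ t in Ioc (0:ℝ) s, g t := by
    have h1 : Tendsto (fun ε => s ^ 2 * V s - ε ^ 2 * V ε) (nhdsWithin 0 (Ioi 0))
        (nhds (s ^ 2 * V s - 0)) := tendsto_const_nhds.sub hlim
    have h2 : Tendsto (fun ε => (∫ t in Ioc (0:ℝ) s, g t) - ∫ t in Ioc (0:ℝ) ε, g t)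
        (nhdsWithin 0 (Ioi 0)) (nhds ((∫ t in Ioc (0:ℝ) s, g t) - 0)) :=
      tendsto_const_nhds.sub hFtend
    have hev : (fun ε => s ^ 2 * V s - ε ^ 2 * V ε)
        =ᶠ[nhdsWithin 0 (Ioi 0)] (fun ε => (∫ t in Ioc (0:ℝ) s, g t) - ∫ t in Ioc (0:ℝ) ε, g t) := by
      filter_upwards [Ioc_mem_nhdsGT_of_mem ⟨le_refl (0:ℝ), hs0⟩] with ε hε
      exact key ε hε
    have := tendsto_nhds_unique (h1.congr' hev) h2
    linarith
  -- bound the integral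
  have hnorm : |∫ t in Ioc (0:ℝ) s, g t| ≤ ∫ t in Ioc (0:ℝ) s, ‖g t‖ := by
    simpa [Real.norm_eq_abs] using norm_integral_le_integral_norm (μ := volume.restrict (Ioc (0:ℝ) s)) g
  have hmono : (∫ t in Ioc (0:ℝ) s, ‖g t‖)
      ≤ ∫ t in Ioc (0:ℝ) s, (s ^ 2 * ((1/2) * Δ ^ 2) + s ^ 2 * h t) :=
    setIntegral_mono_on hgint.norm hGint measurableSet_Ioc hgbound
  have hval : (∫ t in Ioc (0:ℝ) s, (s ^ 2 * ((1/2) * Δ ^ 2) + s ^ 2 * h t))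
      = s ^ 2 * ((1/2) * Δ ^ 2) * s + s ^ 2 * ∫ t in Ioc (0:ℝ) s, h t := by
    rw [integral_add (integrable_const _) (hhints.const_mul _), integral_const,
      integral_const_mul]
    rw [measureReal_restrict_apply_univ, Real.volume_real_Ioc, sub_zero,
      max_eq_left (le_of_lt hs0)]
    simp only [smul_eq_mul]
    ring
  have hhs : (∫ t in Ioc (0:ℝ) s, h t) ≤ Δ ^ 2 := by
    refine le_trans ?_ hhΔ
    apply setIntegral_mono_set hhint
    · rw [EventuallyLE, ae_restrict_iff' measurableSet_Ioc]
      exact Filter.Eventually.of_forall (fun t ht => hh t ht)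
    · exact HasSubset.Subset.eventuallyLE hsub
  have hfinal : |s ^ 2 * V s| ≤ 2 * (s ^ 2 * Δ ^ 2) := by
    rw [heq]
    have h1 : s ^ 2 * ((1/2) * Δ ^ 2) * s + s ^ 2 * ∫ t in Ioc (0:ℝ) s, h t
        ≤ 2 * (s ^ 2 * Δ ^ 2) := by
      have a1 : s ^ 2 * (∫ t in Ioc (0:ℝ) s, h t) ≤ s ^ 2 * Δ ^ 2 :=
        mul_le_mul_of_nonneg_left hhs (sq_nonneg s)
      nlinarith [mul_nonneg (mul_nonneg (sq_nonneg s) (sq_nonneg Δ))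
        (by linarith : (0:ℝ) ≤ 2 - s)]
    have := hnorm.trans (hmono.trans (hval ▸ h1))
    linarith [abs_le.mp this]
  have hs2 : 0 < s ^ 2 := by positivity
  rw [abs_mul, abs_of_nonneg (le_of_lt hs2)] at hfinal
  have h2 : |V s| * s ^ 2 ≤ (2 * Δ ^ 2) * s ^ 2 := by nlinarith
  exact le_of_mul_le_mul_right h2 hs2
end

section
/- Let F : (0,1] → ℝ≥0 be absolutely continuous satisfying F'(t) + (p/2)·(v'(t)/v(t))·F(t) ≤ G(t)F(t) + H(t), where v : (0,1] → (0,∞) is C¹ and increasing, p ≥ 1 is an integer, G, H ≥ 0 are integrable, and v(t)^{p/2}F(t) → 0 as t → 0⁺. Then F(t) ≤ exp(∫₀¹ G)·v(t)^{−p/2}·∫₀ᵗ v(t')^{p/2} H(t') dt' for all t ∈ (0,1]. -/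
open MeasureTheory Set Filter

lemma ereal_toReal_nonneg' {e : EReal} (he : 0 ≤ e) : 0 ≤ e.toReal := by
  rcases eq_or_ne e ⊤ with h | h
  · simp [h]
  · have hb : e ≠ ⊥ := fun hbot => by simp [hbot] at he
    simpa using EReal.toReal_le_toReal he (by simp) h

lemma ereal_coe_le_toReal {c : ℝ} {e : EReal} (h : (c : EReal) < e) (he : e ≠ ⊤) :
    c ≤ e.toReal := by
  simpa using EReal.toReal_le_toReal h.le (by simp) he

lemma ereal_exists_real_btwn {c : ℝ} {e : EReal} (h : (c : EReal) < e) :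
    ∃ d : ℝ, c < d ∧ (d : EReal) < e := by
  rcases eq_or_ne e ⊤ with rfl | hne
  · exact ⟨c + 1, by linarith, EReal.coe_lt_top _⟩
  · have hb : e ≠ ⊥ := by
      intro hbot
      rw [hbot] at h
      exact absurd h (EReal.bot_lt_coe c).asymm
    have hrd : e = ((e.toReal : ℝ) : EReal) := (EReal.coe_toReal hne hb).symm
    have hce : c < e.toReal := by
      rw [hrd] at h; exact_mod_cast h
    refine ⟨(c + e.toReal) / 2, by linarith, ?_⟩
    rw [hrd]
    exact_mod_cast (by linarith : (c + e.toReal) / 2 < e.toReal)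

lemma dini_aux {g : ℝ → EReal} (hlsc : LowerSemicontinuous g)
    (hint : Integrable (fun s => (g s).toReal))
    (hae : ∀ᵐ s, g s < ⊤) {x c : ℝ} (hc : (c : EReal) < g x) :
    ∀ᶠ z in nhdsWithin x (Ioi x), c * (z - x) ≤ ∫ s in Ioc x z, (g s).toReal := by
  obtain ⟨ε, εpos, hball⟩ := Metric.eventually_nhds_iff.1 (hlsc x (c : EReal) hc)
  filter_upwards [Ioo_mem_nhdsGT_of_mem (⟨le_rfl, by linarith⟩ : x ∈ Ico x (x + ε))]
    with z hz
  have hxz : x < z := hz.1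
  have hkey : ∀ᵐ s ∂(volume.restrict (Ioc x z)), c ≤ (g s).toReal := by
    rw [ae_restrict_iff' measurableSet_Ioc]
    filter_upwards [hae] with s hs hmem
    have hds : dist s x < ε := by
      rw [Real.dist_eq, abs_of_pos (by linarith [hmem.1] : (0:ℝ) < s - x)]
      have h1 := hmem.2
      have h2 := hz.2
      linarith
    exact ereal_coe_le_toReal (hball hds) hs.ne
  calc c * (z - x) = ∫ _s in Ioc x z, c := by
        simp [Real.volume_Ioc, ENNReal.toReal_ofReal (by linarith : (0:ℝ) ≤ z - x), mul_comm, hxz.le]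
    _ ≤ ∫ s in Ioc x z, (g s).toReal := by
        apply integral_mono_ae
          (show IntegrableOn (fun _ => c) (Ioc x z) volume from integrableOn_const measure_Ioc_lt_top.ne)
          hint.integrableOn hkey

lemma crossing {f B : ℝ → ℝ} {a b : ℝ} (hab : a < b)
    (hf : ContinuousOn f (Icc a b)) (hB : ContinuousOn B (Icc a b))
    (ha : f a < B a)
    (key : ∀ x ∈ Ico a b, f x = B x → ∃ c : ℝ,
        (∀ᶠ z in nhdsWithin x (Ioi x), f z - f x ≤ c * (z - x)) ∧
        (∀ᶠ z in nhdsWithin x (Ioi x), c * (z - x) ≤ B z - B x)) :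
    f b ≤ B b := by
  set s : Set ℝ := {y | f y ≤ B y} with hs
  have hclosed : IsClosed (s ∩ Icc a b) := by
    have heq : s ∩ Icc a b = Icc a b ∩ (fun y => f y - B y) ⁻¹' Iic 0 := by
      ext y; simp [hs, and_comm, sub_nonpos]
    rw [heq]
    exact ContinuousOn.preimage_isClosed_of_isClosed (hf.sub hB) isClosed_Icc isClosed_Iic
  have hsub : Icc a b ⊆ s := by
    apply hclosed.Icc_subset_of_forall_exists_gt (le_of_lt ha)
    rintro x ⟨hxs, hxa, hxb⟩ y hy
    have hxIcc : x ∈ Icc a b := ⟨hxa, le_of_lt hxb⟩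
    have hne : (nhdsWithin x (Ioc x b)).NeBot := by
      rw [← mem_closure_iff_nhdsWithin_neBot, closure_Ioc (ne_of_lt hxb)]
      exact ⟨le_rfl, le_of_lt hxb⟩
    have hIocsub : Ioc x b ⊆ Icc a b := fun z hz => ⟨le_trans hxa (le_of_lt hz.1), hz.2⟩
    have hysmall : ∀ᶠ z in nhdsWithin x (Ioc x b), z ≤ y :=
      nhdsWithin_le_nhds (Filter.eventually_iff_exists_mem.2 ⟨Iio y, Iio_mem_nhds hy, fun z hz => le_of_lt hz⟩)
    have hself : ∀ᶠ z in nhdsWithin x (Ioc x b), z ∈ Ioc x b := self_mem_nhdsWithin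
    rcases lt_or_eq_of_le (show f x ≤ B x from hxs) with hlt | heq2
    · have hcont : ContinuousWithinAt (fun yy => f yy - B yy) (Icc a b) x :=
        (hf.sub hB) x hxIcc
      have hev : ∀ᶠ z in nhdsWithin x (Icc a b), f z - B z < 0 :=
        hcont.eventually_lt_const (show f x - B x < 0 by linarith)
      have hev2 : ∀ᶠ z in nhdsWithin x (Ioc x b), f z - B z < 0 :=
        hev.filter_mono (nhdsWithin_mono x hIocsub)
      obtain ⟨z, hz1, hz2, hz3⟩ := (hev2.and (hysmall.and hself)).exists
      exact ⟨z, le_of_lt (sub_neg.1 hz1), hz3.1, hz2⟩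
    · obtain ⟨c, h1, h2⟩ := key x ⟨hxa, hxb⟩ heq2
      have hmono : nhdsWithin x (Ioc x b) ≤ nhdsWithin x (Ioi x) :=
        nhdsWithin_mono x fun z hz => hz.1
      obtain ⟨z, hz1, hz2, hz3, hz4⟩ :=
        ((h1.filter_mono hmono).and ((h2.filter_mono hmono).and (hysmall.and hself))).exists
      refine ⟨z, ?_, hz4.1, hz3⟩
      have : f z ≤ f x + c * (z - x) := by linarith
      have : f z ≤ B x + (B z - B x) := by rw [← heq2]; linarith
      simpa [hs] using by linarith
  exact hsub ⟨le_of_lt hab, le_rfl⟩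

lemma exp_diff_aux (X Y : ℝ) : Real.exp X * (Y - X) ≤ Real.exp Y - Real.exp X := by
  have h1 : (Y - X) + 1 ≤ Real.exp (Y - X) := Real.add_one_le_exp (Y - X)
  have h2 : Real.exp Y = Real.exp X * Real.exp (Y - X) := by rw [← Real.exp_add]; ring_nf
  nlinarith [Real.exp_pos X]

lemma gronwall_aux (φ G h : ℝ → ℝ)
    (hφd : ∀ x ∈ Ioc (0:ℝ) 1, ∃ d : ℝ, HasDerivAt φ d x ∧ d ≤ G x * φ x + h x)
    (hφ0 : ∀ x ∈ Ioc (0:ℝ) 1, 0 ≤ φ x)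
    (hG : ∀ x ∈ Ioc (0:ℝ) 1, 0 ≤ G x)
    (hh0 : ∀ x ∈ Ioc (0:ℝ) 1, 0 ≤ h x)
    (hGint : IntegrableOn G (Ioc (0:ℝ) 1))
    (hhint : IntegrableOn h (Ioc (0:ℝ) 1))
    (hlimφ : Tendsto φ (nhdsWithin 0 (Ioi 0)) (nhds 0))
    {t : ℝ} (ht0 : 0 < t) (ht1 : t ≤ 1) :
    φ t ≤ Real.exp (∫ s in Ioc (0:ℝ) 1, G s) * ∫ s in Ioc (0:ℝ) t, h s := by
  set C : ℝ := ∫ s in Ioc (0:ℝ) 1, G s with hCdef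
  set Ψ : ℝ := ∫ s in Ioc (0:ℝ) t, h s with hΨdef
  have hφcont : ∀ x ∈ Ioc (0:ℝ) 1, ContinuousAt φ x := by
    intro x hx
    obtain ⟨d, hd, _⟩ := hφd x hx
    exact hd.continuousAt
  have hsubt : Ioc (0:ℝ) t ⊆ Ioc (0:ℝ) 1 := Ioc_subset_Ioc_right ht1
  have hΨnonneg : 0 ≤ Ψ :=
    setIntegral_nonneg measurableSet_Ioc fun x hx => hh0 x (hsubt hx)
  have main : ∀ δ : ℝ, 0 < δ → ∀ a : ℝ, a ∈ Ioo (0:ℝ) t →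
      φ t ≤ (φ a + δ + (Ψ + δ)) * Real.exp (C + δ) := by
    intro δ hδ a ha
    obtain ⟨ha0, hat⟩ := ha
    have haIoc : a ∈ Ioc (0:ℝ) 1 := ⟨ha0, hat.le.trans ht1⟩
    have hIccsub : Icc a t ⊆ Ioc (0:ℝ) 1 := fun z hz => ⟨lt_of_lt_of_le ha0 hz.1, hz.2.trans ht1⟩
    have hG0int : Integrable ((Ioc (0:ℝ) 1).indicator G) :=
      (integrable_indicator_iff measurableSet_Ioc).2 hGint
    obtain ⟨g, hgGt, hglsc, hgint, hgae, hgI⟩ :=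
      exists_lt_lowerSemicontinuous_integral_lt ((Ioc (0:ℝ) 1).indicator G) hG0int hδ
    have hh0int : Integrable ((Ioc (0:ℝ) 1).indicator h) :=
      (integrable_indicator_iff measurableSet_Ioc).2 hhint
    obtain ⟨k, hkGt, hklsc, hkint, hkae, hkI⟩ :=
      exists_lt_lowerSemicontinuous_integral_lt ((Ioc (0:ℝ) 1).indicator h) hh0int hδ
    have hGind : ∀ x, 0 ≤ (Ioc (0:ℝ) 1).indicator G x :=
      fun x => Set.indicator_nonneg (fun y hy => hG y hy) x
    have hhind : ∀ x, 0 ≤ (Ioc (0:ℝ) 1).indicator h x :=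
      fun x => Set.indicator_nonneg (fun y hy => hh0 y hy) x
    obtain ⟨qg, hqgdef⟩ : ∃ qg : ℝ → ℝ, qg = fun s => (g s).toReal := ⟨_, rfl⟩
    obtain ⟨qk, hqkdef⟩ : ∃ qk : ℝ → ℝ, qk = fun s => (k s).toReal := ⟨_, rfl⟩
    have hqgint : Integrable qg := by rw [hqgdef]; exact hgint
    have hqkint : Integrable qk := by rw [hqkdef]; exact hkint
    have hqg0 : ∀ x, 0 ≤ qg x := by
      intro x; rw [hqgdef]
      exact ereal_toReal_nonneg' (le_of_lt (lt_of_le_of_lt (by exact_mod_cast hGind x) (hgGt x)))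
    have hqk0 : ∀ x, 0 ≤ qk x := by
      intro x; rw [hqkdef]
      exact ereal_toReal_nonneg' (le_of_lt (lt_of_le_of_lt (by exact_mod_cast hhind x) (hkGt x)))
    obtain ⟨Bg, hBgdef⟩ : ∃ Bg : ℝ → ℝ, Bg = fun x => ∫ s in Ioc a x, qg s := ⟨_, rfl⟩
    obtain ⟨Pk, hPkdef⟩ : ∃ Pk : ℝ → ℝ, Pk = fun x => ∫ s in Ioc a x, qk s := ⟨_, rfl⟩
    have hBgadd : ∀ x z : ℝ, a ≤ x → x ≤ z → Bg z - Bg x = ∫ s in Ioc x z, qg s := by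
      intro x z hax hxz
      have hu : Ioc a z = Ioc a x ∪ Ioc x z := (Ioc_union_Ioc_eq_Ioc hax hxz).symm
      rw [hBgdef]
      simp only [hu, setIntegral_union (Set.Ioc_disjoint_Ioc_of_le le_rfl) measurableSet_Ioc
        hqgint.integrableOn hqgint.integrableOn]
      ring
    have hPkadd : ∀ x z : ℝ, a ≤ x → x ≤ z → Pk z - Pk x = ∫ s in Ioc x z, qk s := by
      intro x z hax hxz
      have hu : Ioc a z = Ioc a x ∪ Ioc x z := (Ioc_union_Ioc_eq_Ioc hax hxz).symm
      rw [hPkdef]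
      simp only [hu, setIntegral_union (Set.Ioc_disjoint_Ioc_of_le le_rfl) measurableSet_Ioc
        hqkint.integrableOn hqkint.integrableOn]
      ring
    have hBg0 : ∀ x, 0 ≤ Bg x := by
      intro x; rw [hBgdef]
      exact setIntegral_nonneg measurableSet_Ioc fun s _ => hqg0 s
    have hPk0 : ∀ x, 0 ≤ Pk x := by
      intro x; rw [hPkdef]
      exact setIntegral_nonneg measurableSet_Ioc fun s _ => hqk0 s
    obtain ⟨Bfun, hBdef⟩ : ∃ Bfun : ℝ → ℝ,
        Bfun = fun x => (φ a + δ + Pk x) * Real.exp (Bg x) := ⟨_, rfl⟩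
    have hBval : ∀ x, Bfun x = (φ a + δ + Pk x) * Real.exp (Bg x) := by
      intro x; rw [hBdef]
    have hφconti : ContinuousOn φ (Icc a t) := fun x hx =>
      (hφcont x (hIccsub hx)).continuousWithinAt
    have hBgcont : ContinuousOn Bg (Icc a t) := by
      rw [hBgdef]; exact intervalIntegral.continuousOn_primitive hqgint.integrableOn
    have hPkcont : ContinuousOn Pk (Icc a t) := by
      rw [hPkdef]; exact intervalIntegral.continuousOn_primitive hqkint.integrableOn
    have hBcont : ContinuousOn Bfun (Icc a t) := by
      rw [hBdef]
      exact (continuousOn_const.add hPkcont).mul (Real.continuous_exp.comp_continuousOn hBgcont)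
    have hstart : φ a < Bfun a := by
      have h1 : Pk a = 0 := by rw [hPkdef]; simp
      have h2 : Bg a = 0 := by rw [hBgdef]; simp
      rw [hBval a, h1, h2, Real.exp_zero]
      linarith
    have hkey : ∀ x ∈ Ico a t, φ x = Bfun x → ∃ c : ℝ,
        (∀ᶠ z in nhdsWithin x (Ioi x), φ z - φ x ≤ c * (z - x)) ∧
        (∀ᶠ z in nhdsWithin x (Ioi x), c * (z - x) ≤ Bfun z - Bfun x) := by
      intro x hx hfx
      have hxIoc : x ∈ Ioc (0:ℝ) 1 := ⟨lt_of_lt_of_le ha0 hx.1, hx.2.le.trans ht1⟩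
      obtain ⟨d, hd, hdle⟩ := hφd x hxIoc
      have hgx : ((G x : ℝ) : EReal) < g x := by
        have := hgGt x
        rwa [Set.indicator_of_mem hxIoc] at this
      have hkx : ((h x : ℝ) : EReal) < k x := by
        have := hkGt x
        rwa [Set.indicator_of_mem hxIoc] at this
      obtain ⟨c₁, hc₁G, hc₁g⟩ := ereal_exists_real_btwn hgx
      obtain ⟨c₂, hc₂h, hc₂k⟩ := ereal_exists_real_btwn hkx
      have hc₁0 : 0 ≤ c₁ := le_of_lt (lt_of_le_of_lt (hG x hxIoc) hc₁G)
      have hc₂0 : 0 ≤ c₂ := le_of_lt (lt_of_le_of_lt (hh0 x hxIoc) hc₂h)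
      have hPx0 : 0 ≤ φ a + δ + Pk x := by
        have := hφ0 a haIoc; have := hPk0 x; linarith
      have hEx1 : 1 ≤ Real.exp (Bg x) := Real.one_le_exp (hBg0 x)
      refine ⟨c₁ * Bfun x + c₂ * Real.exp (Bg x), ?_, ?_⟩
      · have hdc : d < c₁ * Bfun x + c₂ * Real.exp (Bg x) := by
          have h2 : G x * φ x ≤ c₁ * φ x :=
            mul_le_mul_of_nonneg_right hc₁G.le (hφ0 x hxIoc)
          have h4 : c₂ ≤ c₂ * Real.exp (Bg x) := le_mul_of_one_le_right hc₂0 hEx1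
          rw [← hfx]
          linarith
        have hslope := hasDerivAt_iff_tendsto_slope.1 hd
        have hev : ∀ᶠ z in nhdsWithin x {x}ᶜ,
            slope φ x z < c₁ * Bfun x + c₂ * Real.exp (Bg x) :=
          hslope.eventually_lt_const hdc
        have hmono : nhdsWithin x (Ioi x) ≤ nhdsWithin x {x}ᶜ :=
          nhdsWithin_mono x fun z hz => ne_of_gt hz
        filter_upwards [hev.filter_mono hmono, self_mem_nhdsWithin] with z hz hz2
        have hzx : (0:ℝ) < z - x := sub_pos.2 hz2
        rw [slope_def_field] at hz
        have := (div_lt_iff₀ hzx).1 hz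
        linarith
      · have e1 : ∀ᶠ z in nhdsWithin x (Ioi x), c₁ * (z - x) ≤ ∫ s in Ioc x z, qg s := by
          rw [hqgdef]; exact dini_aux hglsc hgint hgae hc₁g
        have e2 : ∀ᶠ z in nhdsWithin x (Ioi x), c₂ * (z - x) ≤ ∫ s in Ioc x z, qk s := by
          rw [hqkdef]; exact dini_aux hklsc hkint hkae hc₂k
        filter_upwards [e1, e2, self_mem_nhdsWithin] with z h1 h2 hz
        have hxz : x ≤ z := le_of_lt hz
        have hax : a ≤ x := hx.1
        have hBgle : c₁ * (z - x) ≤ Bg z - Bg x := by rw [hBgadd x z hax hxz]; exact h1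
        have hPkle : c₂ * (z - x) ≤ Pk z - Pk x := by rw [hPkadd x z hax hxz]; exact h2
        have hBgmono : Bg x ≤ Bg z := by nlinarith [mul_nonneg hc₁0 (sub_nonneg.2 hxz)]
        have hPkmono : Pk x ≤ Pk z := by nlinarith [mul_nonneg hc₂0 (sub_nonneg.2 hxz)]
        have hEmono : Real.exp (Bg x) ≤ Real.exp (Bg z) := Real.exp_le_exp.2 hBgmono
        have hE : Real.exp (Bg x) * (Bg z - Bg x) ≤ Real.exp (Bg z) - Real.exp (Bg x) :=
          exp_diff_aux _ _
        have t1 : (φ a + δ + Pk x) * (Real.exp (Bg x) * (c₁ * (z - x)))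
            ≤ (φ a + δ + Pk x) * (Real.exp (Bg z) - Real.exp (Bg x)) := by
          apply mul_le_mul_of_nonneg_left _ hPx0
          calc Real.exp (Bg x) * (c₁ * (z - x))
              ≤ Real.exp (Bg x) * (Bg z - Bg x) :=
                mul_le_mul_of_nonneg_left hBgle (Real.exp_pos _).le
            _ ≤ Real.exp (Bg z) - Real.exp (Bg x) := hE
        have t2 : (c₂ * (z - x)) * Real.exp (Bg x) ≤ (Pk z - Pk x) * Real.exp (Bg x) :=
          mul_le_mul_of_nonneg_right hPkle (Real.exp_pos _).le
        have t3 : 0 ≤ (Pk z - Pk x) * (Real.exp (Bg z) - Real.exp (Bg x)) :=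
          mul_nonneg (by linarith) (by linarith)
        calc (c₁ * Bfun x + c₂ * Real.exp (Bg x)) * (z - x)
            = (φ a + δ + Pk x) * (Real.exp (Bg x) * (c₁ * (z - x)))
              + (c₂ * (z - x)) * Real.exp (Bg x) := by rw [hBval x]; ring
          _ ≤ (φ a + δ + Pk x) * (Real.exp (Bg z) - Real.exp (Bg x))
              + (Pk z - Pk x) * Real.exp (Bg x)
              + (Pk z - Pk x) * (Real.exp (Bg z) - Real.exp (Bg x)) := by linarith
          _ = Bfun z - Bfun x := by rw [hBval z, hBval x]; ring
    have hcross := crossing hat hφconti hBcont hstart hkey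
    have hPkt : Pk t ≤ Ψ + δ := by
      have s1 : Pk t ≤ ∫ s in Ioc (0:ℝ) t, qk s := by
        rw [hPkdef]
        apply setIntegral_mono_set hqkint.integrableOn (ae_of_all _ hqk0)
        exact HasSubset.Subset.eventuallyLE (Ioc_subset_Ioc_left ha0.le)
      have i1 : IntegrableOn qk (Ioc (0:ℝ) t) := hqkint.integrableOn
      have i2 : IntegrableOn ((Ioc (0:ℝ) 1).indicator h) (Ioc (0:ℝ) t) := hh0int.integrableOn
      have s2 : ∫ s in Ioc (0:ℝ) t, (qk s - (Ioc (0:ℝ) 1).indicator h s)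
          ≤ ∫ s, (qk s - (Ioc (0:ℝ) 1).indicator h s) := by
        apply setIntegral_le_integral (hqkint.sub hh0int)
        filter_upwards [hkae] with s hs
        have h1 : (((Ioc (0:ℝ) 1).indicator h s : ℝ) : EReal) < k s := hkGt s
        have h2 := ereal_coe_le_toReal h1 hs.ne
        have h2' : (Ioc (0:ℝ) 1).indicator h s ≤ qk s := by rw [hqkdef]; exact h2
        simpa [sub_nonneg] using h2'
      have s3 : ∫ s, (qk s - (Ioc (0:ℝ) 1).indicator h s)
          = (∫ s, qk s) - ∫ s, (Ioc (0:ℝ) 1).indicator h s := integral_sub hqkint hh0int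
      have s4 : ∫ s in Ioc (0:ℝ) t, (qk s - (Ioc (0:ℝ) 1).indicator h s)
          = (∫ s in Ioc (0:ℝ) t, qk s) - ∫ s in Ioc (0:ℝ) t, (Ioc (0:ℝ) 1).indicator h s :=
        integral_sub i1 i2
      have s5 : ∫ s in Ioc (0:ℝ) t, (Ioc (0:ℝ) 1).indicator h s = Ψ := by
        apply setIntegral_congr_fun measurableSet_Ioc
        intro x hx
        exact Set.indicator_of_mem (hsubt hx) h
      have s6 : ∫ s, qk s < (∫ s, (Ioc (0:ℝ) 1).indicator h s) + δ := by
        rw [hqkdef]; exact hkI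
      linarith
    have hBgt : Bg t ≤ C + δ := by
      have s1 : Bg t ≤ ∫ s, qg s := by
        rw [hBgdef]
        exact setIntegral_le_integral hqgint (ae_of_all _ hqg0)
      have s2 : ∫ s, (Ioc (0:ℝ) 1).indicator G s = C := by
        rw [integral_indicator measurableSet_Ioc]
      have s6 : ∫ s, qg s < (∫ s, (Ioc (0:ℝ) 1).indicator G s) + δ := by
        rw [hqgdef]; exact hgI
      linarith
    calc φ t ≤ Bfun t := hcross
      _ = (φ a + δ + Pk t) * Real.exp (Bg t) := hBval t
      _ ≤ (φ a + δ + (Ψ + δ)) * Real.exp (C + δ) := by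
          apply mul_le_mul (by linarith) (Real.exp_le_exp.2 hBgt) (Real.exp_pos _).le
          have := hφ0 a haIoc; linarith
  have step2 : ∀ δ : ℝ, 0 < δ → φ t ≤ (δ + (Ψ + δ)) * Real.exp (C + δ) := by
    intro δ hδ
    have hev : ∀ᶠ a in nhdsWithin 0 (Ioi (0:ℝ)),
        φ t ≤ (φ a + δ + (Ψ + δ)) * Real.exp (C + δ) := by
      filter_upwards [Ioo_mem_nhdsGT_of_mem (⟨le_rfl, ht0⟩ : (0:ℝ) ∈ Ico (0:ℝ) t)] with a ha
      exact main δ hδ a ha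
    have htend : Tendsto (fun a => (φ a + δ + (Ψ + δ)) * Real.exp (C + δ))
        (nhdsWithin 0 (Ioi (0:ℝ))) (nhds ((0 + δ + (Ψ + δ)) * Real.exp (C + δ))) :=
      (Tendsto.add_const _ (Tendsto.add_const _ hlimφ)).mul_const _
    have := ge_of_tendsto htend hev
    linarith
  have step3 : φ t ≤ Ψ * Real.exp C := by
    have hev : ∀ᶠ δ in nhdsWithin 0 (Ioi (0:ℝ)),
        φ t ≤ (δ + (Ψ + δ)) * Real.exp (C + δ) :=
      eventually_nhdsWithin_of_forall fun δ hδ => step2 δ hδ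
    have hcont : Continuous fun δ : ℝ => (δ + (Ψ + δ)) * Real.exp (C + δ) :=
      (continuous_id.add (continuous_const.add continuous_id)).mul
        (Real.continuous_exp.comp (continuous_const.add continuous_id))
    have htend : Tendsto (fun δ : ℝ => (δ + (Ψ + δ)) * Real.exp (C + δ))
        (nhdsWithin 0 (Ioi (0:ℝ))) (nhds ((0 + (Ψ + 0)) * Real.exp (C + 0))) :=
      (hcont.tendsto 0).mono_left nhdsWithin_le_nhds
    have := ge_of_tendsto htend hev
    simpa using this
  calc φ t ≤ Ψ * Real.exp C := step3
    _ = Real.exp C * Ψ := by ring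

/-- Scalar transport estimate: if `F' + (p/2)(v'/v)F ≤ G F + H` with `v` increasing and
positive, `G, H ≥ 0`, and `v^{p/2} F → 0` at `0⁺`, then
`F t ≤ exp(∫₀¹ G) v(t)^{-p/2} ∫₀ᵗ v^{p/2} H`. -/
theorem stmt_3 (p : ℕ) (hp : 1 ≤ p)
    (F F' G H v v' : ℝ → ℝ)
    (hF : ∀ t ∈ Ioc (0:ℝ) 1, HasDerivAt F (F' t) t)
    (hFpos : ∀ t ∈ Ioc (0:ℝ) 1, 0 ≤ F t)
    (hv : ∀ t ∈ Ioc (0:ℝ) 1, HasDerivAt v (v' t) t)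
    (hvpos : ∀ t ∈ Ioc (0:ℝ) 1, 0 < v t)
    (hvmono : MonotoneOn v (Ioc (0:ℝ) 1))
    (hG : ∀ t ∈ Ioc (0:ℝ) 1, 0 ≤ G t)
    (hH : ∀ t ∈ Ioc (0:ℝ) 1, 0 ≤ H t)
    (hGint : IntegrableOn G (Ioc (0:ℝ) 1))
    (hHint : IntegrableOn H (Ioc (0:ℝ) 1))
    (hineq : ∀ t ∈ Ioc (0:ℝ) 1,
      F' t + ((p : ℝ) / 2) * (v' t / v t) * F t ≤ G t * F t + H t)
    (hlim : Tendsto (fun t => v t ^ ((p : ℝ) / 2) * F t)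
      (nhdsWithin 0 (Ioi 0)) (nhds 0)) :
    ∀ t ∈ Ioc (0:ℝ) 1,
      F t ≤ Real.exp (∫ s in Ioc (0:ℝ) 1, G s) * v t ^ (-(p : ℝ) / 2) *
        ∫ s in Ioc (0:ℝ) t, v s ^ ((p : ℝ) / 2) * H s := by
  intro t ht
  obtain ⟨ht0, ht1⟩ := ht
  have hq0 : (0:ℝ) ≤ (p : ℝ) / 2 := by positivity
  have hφ0 : ∀ x ∈ Ioc (0:ℝ) 1, 0 ≤ v x ^ ((p : ℝ) / 2) * F x := fun x hx =>
    mul_nonneg (Real.rpow_nonneg (hvpos x hx).le _) (hFpos x hx)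
  have hh0 : ∀ x ∈ Ioc (0:ℝ) 1, 0 ≤ v x ^ ((p : ℝ) / 2) * H x := fun x hx =>
    mul_nonneg (Real.rpow_nonneg (hvpos x hx).le _) (hH x hx)
  have hφd : ∀ x ∈ Ioc (0:ℝ) 1, ∃ d : ℝ,
      HasDerivAt (fun s => v s ^ ((p : ℝ) / 2) * F s) d x ∧
      d ≤ G x * (v x ^ ((p : ℝ) / 2) * F x) + v x ^ ((p : ℝ) / 2) * H x := by
    intro x hx
    have hvx := hvpos x hx
    have hd1 : HasDerivAt (fun s => v s ^ ((p : ℝ) / 2))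
        ((p : ℝ) / 2 * v x ^ ((p : ℝ) / 2 - 1) * v' x) x :=
      (Real.hasDerivAt_rpow_const (p := (p : ℝ) / 2) (Or.inl hvx.ne')).comp x (hv x hx)
    have hd := hd1.mul (hF x hx)
    refine ⟨_, hd, ?_⟩
    have hrw : v x ^ ((p : ℝ) / 2 - 1) = v x ^ ((p : ℝ) / 2) / v x := by
      rw [Real.rpow_sub hvx, Real.rpow_one]
    have hvq : 0 ≤ v x ^ ((p : ℝ) / 2) := Real.rpow_nonneg hvx.le _
    have hkey := hineq x hx
    have expand : (p : ℝ) / 2 * v x ^ ((p : ℝ) / 2 - 1) * v' x * F x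
          + v x ^ ((p : ℝ) / 2) * F' x
        = v x ^ ((p : ℝ) / 2) * (F' x + (p : ℝ) / 2 * (v' x / v x) * F x) := by
      rw [hrw]; field_simp; ring
    rw [expand]
    calc v x ^ ((p : ℝ) / 2) * (F' x + (p : ℝ) / 2 * (v' x / v x) * F x)
        ≤ v x ^ ((p : ℝ) / 2) * (G x * F x + H x) := mul_le_mul_of_nonneg_left hkey hvq
      _ = G x * (v x ^ ((p : ℝ) / 2) * F x) + v x ^ ((p : ℝ) / 2) * H x := by ring
  have hvcont : ContinuousOn v (Ioc (0:ℝ) 1) := fun x hx =>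
    (hv x hx).continuousAt.continuousWithinAt
  have hvqcont : ContinuousOn (fun s => v s ^ ((p : ℝ) / 2)) (Ioc (0:ℝ) 1) :=
    hvcont.rpow_const fun x _ => Or.inr hq0
  have hhint : IntegrableOn (fun s => v s ^ ((p : ℝ) / 2) * H s) (Ioc (0:ℝ) 1) := by
    apply Integrable.bdd_mul (c := v 1 ^ ((p : ℝ) / 2)) hHint
      (hvqcont.aestronglyMeasurable measurableSet_Ioc)
    refine (ae_restrict_iff' measurableSet_Ioc).2 (ae_of_all _ fun x hx => ?_)
    rw [Real.norm_eq_abs, abs_of_nonneg (Real.rpow_nonneg (hvpos x hx).le _)]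
    exact Real.rpow_le_rpow (hvpos x hx).le (hvmono hx ⟨one_pos, le_rfl⟩ hx.2) hq0
  have key := gronwall_aux (fun s => v s ^ ((p : ℝ) / 2) * F s) G
    (fun s => v s ^ ((p : ℝ) / 2) * H s) hφd hφ0 hG hh0 hGint hhint hlim ht0 ht1
  have hvt := hvpos t ⟨ht0, ht1⟩
  have hvq : (0:ℝ) < v t ^ ((p : ℝ) / 2) := Real.rpow_pos_of_pos hvt _
  have hneg : v t ^ (-(p:ℝ) / 2) = (v t ^ ((p : ℝ) / 2))⁻¹ := by
    rw [neg_div, Real.rpow_neg hvt.le]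
  have hFt : F t = (v t ^ ((p : ℝ) / 2))⁻¹ * (v t ^ ((p : ℝ) / 2) * F t) := by
    field_simp
  calc F t = (v t ^ ((p : ℝ) / 2))⁻¹ * (v t ^ ((p : ℝ) / 2) * F t) := hFt
    _ ≤ (v t ^ ((p : ℝ) / 2))⁻¹ *
        (Real.exp (∫ s in Ioc (0:ℝ) 1, G s) * ∫ s in Ioc (0:ℝ) t, v s ^ ((p : ℝ) / 2) * H s) :=
        mul_le_mul_of_nonneg_left key (inv_nonneg.2 hvq.le)
    _ = Real.exp (∫ s in Ioc (0:ℝ) 1, G s) * (v t ^ ((p : ℝ) / 2))⁻¹ *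
        ∫ s in Ioc (0:ℝ) t, v s ^ ((p : ℝ) / 2) * H s := by ring
    _ = Real.exp (∫ s in Ioc (0:ℝ) 1, G s) * v t ^ (-(p:ℝ) / 2) *
        ∫ s in Ioc (0:ℝ) t, v s ^ ((p : ℝ) / 2) * H s := by rw [hneg]
end
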